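/- Discrete entropy inequality at the right boundary (Lemma 5.1, third inequality): for every convex entropy η ∈ C²(ℝ) and all real numbers a, b, one has Q(a,b) − Q(b,b) − η′(b)·(F(a,b) − F(b,b)) ≥ 0. -/

import Mathlib

/-- Discrete entropy inequality at the right boundary (Lemma 5.1, third
inequality): for every convex entropy `η ∈ C²(ℝ)` with numerical entropy flux
`Q(u,v) = ∫_c^u η'(z) F₁'(z) dz + ∫_c^v η'(z) F₂'(z) dz` and all `a, b ∈ ℝ`,
`Q(a,b) - Q(b,b) - η'(b) (F(a,b) - F(b,b)) ≥ 0`, where `F(u,v) = F₁(u) + F₂(v)`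
and `F₁' ≥ 0`. -/
theorem stmt_10 (F₁ F₂ : ℝ → ℝ) (hF₁ : ContDiff ℝ 1 F₁) (hF₂ : ContDiff ℝ 1 F₂)
    (hmono₁ : ∀ w, 0 ≤ deriv F₁ w)
    (η : ℝ → ℝ) (hη : ContDiff ℝ 2 η) (hconv : ConvexOn ℝ Set.univ η)
    (c : ℝ) (Q : ℝ → ℝ → ℝ)
    (hQ : ∀ u v, Q u v = (∫ z in c..u, deriv η z * deriv F₁ z)
        + ∫ z in c..v, deriv η z * deriv F₂ z)
    (a b : ℝ) :
    0 ≤ Q a b - Q b b - deriv η b * ((F₁ a + F₂ b) - (F₁ b + F₂ b)) := by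
  have hη' : Continuous (deriv η) := hη.continuous_deriv one_le_two
  have hF₁' : Continuous (deriv F₁) := hF₁.continuous_deriv le_rfl
  have hηmono : Monotone (deriv η) := by
    have := hconv.monotoneOn_deriv (fun x _ => ((hη.of_le one_le_two).differentiable one_ne_zero).differentiableAt)
    exact fun x y hxy => this (Set.mem_univ x) (Set.mem_univ y) hxy
  have hFTC : F₁ a - F₁ b = ∫ z in b..a, deriv F₁ z := by
    rw [intervalIntegral.integral_deriv_eq_sub (fun x _ => (hF₁.differentiable one_ne_zero).differentiableAt)
      (hF₁'.intervalIntegrable _ _)]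
  have hQdiff : Q a b - Q b b = ∫ z in b..a, deriv η z * deriv F₁ z := by
    rw [hQ, hQ]
    have := intervalIntegral.integral_interval_sub_left (a := c) (b := a) (c := b) (μ := MeasureTheory.volume)
      ((hη'.mul hF₁').intervalIntegrable _ _) ((hη'.mul hF₁').intervalIntegrable _ _)
    simp only [Pi.mul_apply] at this
    linarith [this]
  have key : Q a b - Q b b - deriv η b * ((F₁ a + F₂ b) - (F₁ b + F₂ b))
      = ∫ z in b..a, (deriv η z - deriv η b) * deriv F₁ z := by
    have : (∫ z in b..a, (deriv η z - deriv η b) * deriv F₁ z)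
        = (∫ z in b..a, deriv η z * deriv F₁ z) - deriv η b * ∫ z in b..a, deriv F₁ z := by
      rw [← intervalIntegral.integral_const_mul, ← intervalIntegral.integral_sub
        (f := fun z => deriv η z * deriv F₁ z) (g := fun z => deriv η b * deriv F₁ z)
        ((hη'.mul hF₁').intervalIntegrable _ _)
        ((continuous_const.mul hF₁').intervalIntegrable _ _)]
      congr 1; ext z; ring
    rw [this, hQdiff, ← hFTC]; ring
  rw [key]
  rcases le_total b a with hab | hab
  · apply intervalIntegral.integral_nonneg hab
    intro x hx
    exact mul_nonneg (sub_nonneg.2 (hηmono hx.1)) (hmono₁ x)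
  · have h := intervalIntegral.integral_nonneg
      (μ := MeasureTheory.volume) (f := fun x => -((deriv η x - deriv η b) * deriv F₁ x)) hab
      (fun x hx => neg_nonneg.2
        (mul_nonpos_of_nonpos_of_nonneg (sub_nonpos.2 (hηmono hx.2)) (hmono₁ x)))
    rw [intervalIntegral.integral_neg] at h
    rw [intervalIntegral.integral_symm]
    linarith
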